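/- In an LM-system R, for any two distinct rules l1 → r1 and l2 → r2 (renamed apart), the right-hand side r1 is not unifiable with the left-hand side l2. -/

import Mathlib

/-! Basic first-order terms, positions, substitutions and rewriting. -/

inductive Term (F : Type) : Type
  | var : Nat → Term F
  | app : F → List (Term F) → Term F

namespace Term

def subst {F : Type} (σ : Nat → Term F) : Term F → Term F
  | var n => σ n
  | app f ts => app f (ts.attach.map fun ⟨t, _⟩ => t.subst σ)

def root {F : Type} : Term F → Option F
  | var _ => none
  | app f _ => some f

def label {F : Type} : Term F → F ⊕ Nat
  | var n => Sum.inr n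
  | app f _ => Sum.inl f

def IsVar {F : Type} : Term F → Prop
  | var _ => True
  | app _ _ => False

def varsL {F : Type} : Term F → List Nat
  | var n => [n]
  | app _ ts => (ts.attach.map fun ⟨t, _⟩ => t.varsL).flatten

end Term

abbrev Rule (F : Type) := Term F × Term F
abbrev TRS (F : Type) := Set (Rule F)

/-- `SubtermAt t p u` : the subterm of `t` at position `p` is `u`. -/
inductive SubtermAt {F : Type} : Term F → List Nat → Term F → Prop
  | here (t : Term F) : SubtermAt t [] t
  | there {f : F} {ts : List (Term F)} {i : Nat} {u : Term F} {p : List Nat} {v : Term F} :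
      ts[i]? = some u → SubtermAt u p v → SubtermAt (Term.app f ts) (i :: p) v

/-- `ReplaceAt t p v t'` : replacing the subterm of `t` at position `p` by `v` yields `t'`. -/
inductive ReplaceAt {F : Type} : Term F → List Nat → Term F → Term F → Prop
  | here (t u : Term F) : ReplaceAt t [] u u
  | there {f : F} {ts : List (Term F)} {i : Nat} {u : Term F} {p : List Nat} {v w : Term F} :
      ts[i]? = some u → ReplaceAt u p v w →
      ReplaceAt (Term.app f ts) (i :: p) v (Term.app f (ts.set i w))

variable {F : Type}

/-- One rewrite step using the given rule (at some position, with some substitution). -/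
def RuleStep (ρ : Rule F) (s t : Term F) : Prop :=
  ∃ (σ : Nat → Term F) (p : List Nat),
    SubtermAt s p (ρ.1.subst σ) ∧ ReplaceAt s p (ρ.2.subst σ) t

def OneStep (R : TRS F) (s t : Term F) : Prop := ∃ ρ ∈ R, RuleStep ρ s t

/-- A rewrite step at the root position. -/
def RootStep (R : TRS F) (s t : Term F) : Prop :=
  ∃ ρ ∈ R, ∃ σ : Nat → Term F, s = ρ.1.subst σ ∧ t = ρ.2.subst σ

def StarRW (R : TRS F) : Term F → Term F → Prop := Relation.ReflTransGen (OneStep R)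
def Plus (R : TRS F) : Term F → Term F → Prop := Relation.TransGen (OneStep R)
/-- Convertibility (the congruence / equational theory generated by `R`). -/
def Conv (R : TRS F) : Term F → Term F → Prop := Relation.EqvGen (OneStep R)
def Joinable (R : TRS F) (s t : Term F) : Prop := ∃ u, StarRW R s u ∧ StarRW R t u
def NormalForm (R : TRS F) (t : Term F) : Prop := ∀ u, ¬ OneStep R t u
/-- `t` is the `R`-normal form of `s`. -/
def NFof (R : TRS F) (s t : Term F) : Prop := StarRW R s t ∧ NormalForm R t
def Terminating (R : TRS F) : Prop := WellFounded (fun a b : Term F => OneStep R b a)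
def Confluent (R : TRS F) : Prop := ∀ s t u, StarRW R s t → StarRW R s u → Joinable R t u
def Convergent (R : TRS F) : Prop := Confluent R ∧ Terminating R

/-- every proper subterm is irreducible -/
def EpsIrreducible (R : TRS F) (t : Term F) : Prop :=
  ∀ p u, SubtermAt t p u → p ≠ [] → NormalForm R u

def InnermostRedex (R : TRS F) (t : Term F) : Prop :=
  EpsIrreducible R t ∧ ¬ NormalForm R t

/-- Forward-closed, via the one-step-to-normal-form characterization. -/
def FCclosed (R : TRS F) : Prop :=
  ∀ t, InnermostRedex R t → ∀ u, NFof R t u → OneStep R t u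

def Unifies (σ : Nat → Term F) (s t : Term F) : Prop := s.subst σ = t.subst σ

def IsMGU (σ : Nat → Term F) (s t : Term F) : Prop :=
  Unifies σ s t ∧ ∀ τ, Unifies τ s t → ∃ δ, ∀ x, τ x = (σ x).subst δ

def IsRenaming (ρ : Nat → Term F) : Prop :=
  ∃ f : Nat → Nat, Function.Injective f ∧ ∀ n, ρ n = Term.var (f n)

/-- Redundancy criterion for an oriented equation `e` whose right-hand side is
reachable from its left-hand side: some proper subterm of the lhs is reducible. -/
def Redundant (R : TRS F) (e : Rule F) : Prop :=
  ∃ p u, p ≠ ([] : List Nat) ∧ SubtermAt e.1 p u ∧ ¬ NormalForm R u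

/-- `R₁ ↝ R₂`: forward overlaps of rules of `R₂` (renamed apart) into
right-hand sides of rules of `R₁`, at non-variable positions, via an mgu. -/
def FStep (R₁ R₂ : TRS F) : TRS F :=
  { e | ∃ (l₁ r₁ l₂ r₂ : Term F) (ρ : Nat → Term F) (p : List Nat) (u : Term F)
          (σ : Nat → Term F) (r₁' : Term F),
      (l₁, r₁) ∈ R₁ ∧ (l₂, r₂) ∈ R₂ ∧ IsRenaming ρ ∧
      SubtermAt r₁ p u ∧ ¬ u.IsVar ∧ IsMGU σ u (l₂.subst ρ) ∧
      ReplaceAt r₁ p (r₂.subst ρ) r₁' ∧ e = (l₁.subst σ, r₁'.subst σ) }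

def FCiter (R : TRS F) : Nat → TRS F
  | 0 => R
  | k + 1 => FCiter R k ∪ { e | e ∈ FStep (FCiter R k) R ∧ ¬ Redundant (FCiter R k) e }

def FCinf (R : TRS F) : TRS F := ⋃ k, FCiter R k

/-- Forward-closed, via the forward-closure construction: `FC(R) = R`. -/
def ForwardClosedFC (R : TRS F) : Prop := FCinf R = R

/-- `RHS(R)`: `R` together with the conclusions of right-hand-side critical
pair inferences (second rule renamed apart). -/
def RHSset (R : TRS F) : TRS F :=
  R ∪ { e | ∃ (s t u₀ v₀ : Term F) (ρ σ : Nat → Term F), (s, t) ∈ R ∧ (u₀, v₀) ∈ R ∧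
        IsRenaming ρ ∧ IsMGU σ t (v₀.subst ρ) ∧
        s.subst σ ≠ (u₀.subst ρ).subst σ ∧ e = (s.subst σ, (u₀.subst ρ).subst σ) }

/-- the (unordered) pairs of root symbols of two equations coincide -/
def RootPairSimilar (e₁ e₂ : Rule F) : Prop :=
  (e₁.1.root = e₂.1.root ∧ e₁.2.root = e₂.2.root) ∨
  (e₁.1.root = e₂.2.root ∧ e₁.2.root = e₂.1.root)

def QuasiDet (E : TRS F) : Prop :=
  (∀ e ∈ E, ¬ e.1.IsVar ∧ ¬ e.2.IsVar) ∧
  (∀ e ∈ E, e.1.root ≠ e.2.root) ∧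
  (∀ e₁ ∈ E, ∀ e₂ ∈ E, e₁ ≠ e₂ → ¬ RootPairSimilar e₁ e₂)

def HasRootPairRepetition (E : TRS F) : Prop :=
  ∃ e₁ ∈ E, ∃ e₂ ∈ E, e₁ ≠ e₂ ∧ RootPairSimilar e₁ e₂

def VarPreserving (R : TRS F) : Prop :=
  ∀ e ∈ R, ∀ n, n ∈ Term.varsL e.1 ↔ n ∈ Term.varsL e.2

def RightReduced (R : TRS F) : Prop := ∀ e ∈ R, NormalForm R e.2

def AlmostLeftReduced (R : TRS F) : Prop :=
  ¬ ∃ (l₁ r₁ l₂ r₂ : Term F) (p : List Nat) (u : Term F) (σ : Nat → Term F),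
      (l₁, r₁) ∈ R ∧ (l₂, r₂) ∈ R ∧ p ≠ [] ∧ SubtermAt l₁ p u ∧ u = l₂.subst σ

def NonSubtermCollapsing (R : TRS F) : Prop :=
  ¬ ∃ (t u : Term F) (p : List Nat), p ≠ [] ∧ SubtermAt u p t ∧ Conv R t u

structure LMSystem (R : TRS F) : Prop where
  convergent : Convergent R
  almostLeftReduced : AlmostLeftReduced R
  rightReduced : RightReduced R
  nonCollapsing : NonSubtermCollapsing R
  forwardClosed : FCclosed R
  quasiDet : QuasiDet (RHSset R)

/-- the symbol (function symbol or variable) of a term at a position, if defined -/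
def labelAt {F : Type} : List Nat → Term F → Option (F ⊕ Nat)
  | [], t => some t.label
  | i :: p, Term.app _ ts => (ts[i]?).bind (labelAt p)
  | _ :: _, Term.var _ => none

/-- outermost distinguishing position -/
def ODP (s t : Term F) (p : List Nat) : Prop :=
  (labelAt p s ≠ none ∨ labelAt p t ≠ none) ∧
  labelAt p s ≠ labelAt p t ∧
  ∀ q, q <+: p → q ≠ p → labelAt q s = labelAt q t



/-! ### Auxiliary development -/

namespace Term

@[simp] theorem subst_var {F : Type} (σ : Nat → Term F) (n : Nat) :
    (var n : Term F).subst σ = σ n := by simp [subst]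

@[simp] theorem subst_app {F : Type} (σ : Nat → Term F) (f : F) (ts : List (Term F)) :
    (app f ts).subst σ = app f (ts.map (subst σ)) := by
  simp [subst, List.attach_map_val]

@[simp] theorem varsL_var {F : Type} (n : Nat) : (var n : Term F).varsL = [n] := by simp [varsL]

@[simp] theorem varsL_app {F : Type} (f : F) (ts : List (Term F)) :
    (app f ts).varsL = (ts.map varsL).flatten := by
  simp [varsL, List.attach_map_val]

def size {F : Type} : Term F → Nat
  | var _ => 1
  | app _ ts => 1 + (ts.attach.map fun ⟨t, _⟩ => t.size).sum

@[simp] theorem size_var {F : Type} (n : Nat) : (var n : Term F).size = 1 := by simp [size]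

@[simp] theorem size_app {F : Type} (f : F) (ts : List (Term F)) :
    (app f ts).size = 1 + (ts.map size).sum := by
  simp [size, List.attach_map_val]

theorem size_pos {F : Type} (t : Term F) : 0 < t.size := by
  cases t <;> simp <;> omega

theorem size_lt_of_mem {F : Type} {t : Term F} {f : F} {ts : List (Term F)}
    (h : t ∈ ts) : t.size < (app f ts).size := by
  simp only [size_app]
  have : t.size ≤ (ts.map size).sum := List.le_sum_of_mem (List.mem_map_of_mem h)
  omega

/-- структурная индукция -/
theorem my_induction {F : Type} {P : Term F → Prop}
    (hv : ∀ n, P (var n)) (ha : ∀ f ts, (∀ t ∈ ts, P t) → P (app f ts)) :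
    ∀ t, P t := by
  suffices H : ∀ (n : Nat) (t : Term F), t.size ≤ n → P t from fun t => H t.size t le_rfl
  intro n
  induction n with
  | zero => intro t h; exact absurd (Nat.lt_of_lt_of_le (size_pos t) h) (by simp)
  | succ n ih =>
    intro t h
    cases t with
    | var m => exact hv m
    | app f ts =>
      refine ha f ts fun t' ht' => ih t' ?_
      have := size_lt_of_mem (f := f) ht'
      omega

theorem subst_ext {F : Type} {σ τ : Nat → Term F} :
    ∀ (t : Term F), (∀ n ∈ t.varsL, σ n = τ n) → t.subst σ = t.subst τ := by
  intro t
  induction t using my_induction with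
  | hv n => intro h; simpa using h n (by simp)
  | ha f ts ih =>
    intro h
    simp only [subst_app, app.injEq, true_and]
    apply List.map_congr_left
    intro t' ht'
    apply ih t' ht'
    intro n hn
    apply h
    simp only [varsL_app, List.mem_flatten]
    exact ⟨t'.varsL, List.mem_map_of_mem ht', hn⟩

theorem subst_subst {F : Type} (σ τ : Nat → Term F) :
    ∀ (t : Term F), (t.subst σ).subst τ = t.subst (fun n => (σ n).subst τ) := by
  intro t
  induction t using my_induction with
  | hv n => simp
  | ha f ts ih =>
    simp only [subst_app, List.map_map, app.injEq, true_and]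
    apply List.map_congr_left
    intro t' ht'
    exact ih t' ht'

theorem root_subst {F : Type} {t : Term F} (h : ¬ t.IsVar) (σ : Nat → Term F) :
    (t.subst σ).root = t.root := by
  cases t with
  | var n => exact absurd trivial h
  | app f ts => simp [root]

theorem not_isVar_of_subst_eq {F : Type} {t : Term F} {f : F} {ts : List (Term F)}
    {σ : Nat → Term F} (h : t.subst σ = app f ts) (hv : ¬ t.IsVar) : t.root = some f := by
  cases t with
  | var n => exact absurd trivial hv
  | app g us => simp only [subst_app] at h; cases h; rfl

theorem size_subst_le {F : Type} (σ : Nat → Term F) {x : Nat} :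
    ∀ (t : Term F), x ∈ t.varsL → (σ x).size ≤ (t.subst σ).size := by
  intro t
  induction t using my_induction with
  | hv n => intro h; simp at h; subst h; simp
  | ha f ts ih =>
    intro h
    simp only [varsL_app, List.mem_flatten, List.mem_map] at h
    obtain ⟨_, ⟨t', ht', rfl⟩, hx⟩ := h
    have h1 : (σ x).size ≤ (t'.subst σ).size := ih t' ht' hx
    have h2 : (t'.subst σ).size < ((app f ts).subst σ).size := by
      simp only [subst_app]
      exact size_lt_of_mem (List.mem_map_of_mem ht')
    omega

theorem size_subst_lt {F : Type} (σ : Nat → Term F) {x : Nat} {f : F} {ts : List (Term F)}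
    (h : x ∈ (app f ts).varsL) : (σ x).size < ((app f ts).subst σ).size := by
  simp only [varsL_app, List.mem_flatten, List.mem_map] at h
  obtain ⟨_, ⟨t', ht', rfl⟩, hx⟩ := h
  calc (σ x).size ≤ (t'.subst σ).size := size_subst_le σ t' hx
    _ < ((app f ts).subst σ).size := by
        simp only [subst_app]
        exact size_lt_of_mem (List.mem_map_of_mem ht')

end Term

/-! ### Positions -/

theorem SubtermAt.nil_eq {t u : Term F} (h : SubtermAt t [] u) : u = t := by
  cases h; rfl

theorem ReplaceAt.nil_eq {t v t' : Term F} (h : ReplaceAt t [] v t') : t' = v := by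
  cases h; rfl

theorem SubtermAt.exists_replace {t u : Term F} {p : List Nat}
    (h : SubtermAt t p u) : ∀ v, ∃ t', ReplaceAt t p v t' := by
  induction h with
  | here t => exact fun v => ⟨v, ReplaceAt.here t v⟩
  | there hget _ ih =>
    intro v
    obtain ⟨w, hw⟩ := ih v
    exact ⟨_, ReplaceAt.there hget hw⟩

theorem SubtermAt.trans {t u v : Term F} {p q : List Nat}
    (h1 : SubtermAt t p u) (h2 : SubtermAt u q v) : SubtermAt t (p ++ q) v := by
  induction h1 with
  | here t => exact h2
  | there hget _ ih => exact SubtermAt.there hget (ih h2)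

theorem ReplaceAt.trans {t u v w t' : Term F} {p q : List Nat}
    (h1 : SubtermAt t p u) (h2 : ReplaceAt u q v w) (h3 : ReplaceAt t p w t') :
    ReplaceAt t (p ++ q) v t' := by
  induction h1 generalizing t' with
  | here t => rw [h3.nil_eq]; exact h2
  | there hget _ ih =>
    cases h3 with
    | there hget' h3' =>
      rw [hget] at hget'
      cases hget'
      exact ReplaceAt.there hget (ih h2 h3')


theorem ReplaceAt.root_eq {t v t' : Term F} {p : List Nat}
    (h : ReplaceAt t p v t') (hp : p ≠ []) : t'.root = t.root := by
  cases h with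
  | here => exact absurd rfl hp
  | there => rfl

/-! ### Rewriting basics -/

theorem rule_root_step {R : TRS F} {l r : Term F} (hR : (l, r) ∈ R) (σ : Nat → Term F) :
    OneStep R (l.subst σ) (r.subst σ) :=
  ⟨(l, r), hR, σ, [], SubtermAt.here _, ReplaceAt.here _ _⟩

theorem onestep_lift {R : TRS F} {t u u' t' : Term F} {p : List Nat}
    (hs : SubtermAt t p u) (hr : ReplaceAt t p u' t') (h : OneStep R u u') :
    OneStep R t t' := by
  obtain ⟨ρ, hρ, σ, q, hq1, hq2⟩ := h
  exact ⟨ρ, hρ, σ, p ++ q, hs.trans hq1, ReplaceAt.trans hs hq2 hr⟩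

theorem not_normal_of_subterm {R : TRS F} {t u : Term F} {p : List Nat}
    (hs : SubtermAt t p u) (h : ¬ NormalForm R u) : ¬ NormalForm R t := by
  intro hn
  apply h
  intro u' hu'
  obtain ⟨t', ht'⟩ := hs.exists_replace u'
  exact hn t' (onestep_lift hs ht' hu')

theorem NormalForm.subterm {R : TRS F} {t u : Term F} {p : List Nat}
    (hn : NormalForm R t) (hs : SubtermAt t p u) : NormalForm R u := by
  by_contra h
  exact not_normal_of_subterm hs h hn

theorem var_normal {R : TRS F} (hq : QuasiDet (RHSset R)) (n : Nat) :
    NormalForm R (Term.var n) := by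
  intro u hu
  obtain ⟨ρ, hρ, σ, p, hp1, hp2⟩ := hu
  generalize hg : ρ.1.subst σ = w at hp1
  cases hp1 with
  | here =>
    have h1 : ¬ ρ.1.IsVar := (hq.1 ρ (Or.inl hρ)).1
    cases hh : ρ.1 with
    | var m => rw [hh] at h1; exact h1 trivial
    | app f ts =>
      rw [hh] at hg
      simp only [Term.subst_app] at hg
      cases hg

theorem nf_exists {R : TRS F} (hT : Terminating R) (t : Term F) :
    ∃ u, NFof R t u := by
  induction t using hT.induction with
  | _ t ih =>
    by_cases h : NormalForm R t
    · exact ⟨t, Relation.ReflTransGen.refl, h⟩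
    · simp only [NormalForm, not_forall, not_not] at h
      obtain ⟨u, hu⟩ := h
      obtain ⟨v, hv1, hv2⟩ := ih u hu
      exact ⟨v, Relation.ReflTransGen.head hu hv1, hv2⟩

theorem normal_star_eq {R : TRS F} {t u : Term F} (hn : NormalForm R t)
    (h : StarRW R t u) : u = t := by
  cases h.cases_head with
  | inl h => exact h.symm
  | inr h => obtain ⟨c, hc, _⟩ := h; exact absurd hc (hn c)

/-- from confluence: anything reachable from `t` reaches the normal form of `t`. -/
theorem star_to_nf {R : TRS F} (hC : Confluent R) {t u v : Term F}
    (hnf : NFof R t u) (h : StarRW R t v) : StarRW R v u := by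
  obtain ⟨w, hw1, hw2⟩ := hC t v u h hnf.1
  rwa [normal_star_eq hnf.2 hw2] at hw1

section ListHelpers
variable {α : Type*}

theorem list_set_self : ∀ (ts : List α) (i : Nat) (a : α), ts[i]? = some a → ts.set i a = ts
  | [], _, _ => by simp
  | t :: ts, 0, a => by simp; intro h; simp [h]
  | t :: ts, i + 1, a => by
      simp only [List.getElem?_cons_succ, List.set_cons_succ]
      intro h
      rw [list_set_self ts i a h]

theorem list_get_set_self : ∀ (ts : List α) (i : Nat) (a b : α),
    ts[i]? = some a → (ts.set i b)[i]? = some b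
  | [], _, _, _ => by simp
  | t :: ts, 0, a, b => by simp
  | t :: ts, i + 1, a, b => by
      simp only [List.getElem?_cons_succ, List.set_cons_succ]
      exact list_get_set_self ts i a b

theorem list_get_set_ne : ∀ (ts : List α) (i j : Nat) (b : α), i ≠ j →
    (ts.set i b)[j]? = ts[j]?
  | [], _, _, _ => by simp
  | t :: ts, 0, 0, b => by simp
  | t :: ts, 0, j + 1, b => by simp
  | t :: ts, i + 1, 0, b => by simp
  | t :: ts, i + 1, j + 1, b => by
      intro h
      simp only [List.getElem?_cons_succ, List.set_cons_succ]
      exact list_get_set_ne ts i j b (by omega)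

theorem list_set_set : ∀ (ts : List α) (i : Nat) (a b : α), (ts.set i a).set i b = ts.set i b
  | [], _, _, _ => by simp
  | t :: ts, 0, a, b => by simp
  | t :: ts, i + 1, a, b => by
      simp only [List.set_cons_succ]
      rw [list_set_set ts i a b]

end ListHelpers

theorem star_set {R : TRS F} {a b : Term F} (h : StarRW R a b) :
    ∀ {f : F} {ts : List (Term F)} {i : Nat}, ts[i]? = some a →
    StarRW R (Term.app f ts) (Term.app f (ts.set i b)) := by
  induction h with
  | refl =>
    intro f ts i hget
    rw [list_set_self ts i a hget]
    exact Relation.ReflTransGen.refl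
  | tail h1 h2 ih =>
    intro f ts i hget
    rename_i c d
    refine Relation.ReflTransGen.tail (ih hget) ?_
    have hstep : OneStep R (Term.app f (ts.set i c)) (Term.app f ((ts.set i c).set i d)) :=
      onestep_lift (SubtermAt.there (list_get_set_self ts i a c hget) (SubtermAt.here c))
        (ReplaceAt.there (list_get_set_self ts i a c hget) (ReplaceAt.here c d)) h2
    rwa [list_set_set] at hstep

theorem nf_args {R : TRS F} (hT : Terminating R) (f : F) (ts : List (Term F)) :
    ∃ us : List (Term F), StarRW R (Term.app f ts) (Term.app f us) ∧
      ∀ u ∈ us, NormalForm R u := by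
  have key : ∀ k : Nat, ∃ us : List (Term F),
      us.length = ts.length ∧
      StarRW R (Term.app f ts) (Term.app f us) ∧
      (∀ j u, j < k → us[j]? = some u → NormalForm R u) ∧
      (∀ j, k ≤ j → us[j]? = ts[j]?) := by
    intro k
    induction k with
    | zero => exact ⟨ts, rfl, Relation.ReflTransGen.refl, by omega, fun _ _ => rfl⟩
    | succ k ih =>
      obtain ⟨us, h0, h1, h2, h3⟩ := ih
      cases hk : us[k]? with
      | none =>
        refine ⟨us, h0, h1, ?_, fun j hj => h3 j (by omega)⟩
        intro j u hj hget
        rcases Nat.lt_or_ge j k with h | h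
        · exact h2 j u h hget
        · have hjk : j = k := by omega
          rw [hjk, hk] at hget; cases hget
      | some a =>
        obtain ⟨a', ha'1, ha'2⟩ := nf_exists hT a
        refine ⟨us.set k a', by simp [h0],
          Relation.ReflTransGen.trans h1 (star_set ha'1 hk), ?_, ?_⟩
        · intro j u hj hget
          rcases Nat.lt_or_ge j k with h | h
          · rw [list_get_set_ne us k j a' (by omega)] at hget
            exact h2 j u h hget
          · have hjk : j = k := by omega
            rw [hjk, list_get_set_self us k a a' hk] at hget
            cases hget; exact ha'2
        · intro j hj
          rw [list_get_set_ne us k j a' (by omega)]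
          exact h3 j (by omega)
  obtain ⟨us, h0, h1, h2, _⟩ := key ts.length
  refine ⟨us, h1, ?_⟩
  intro u hu
  obtain ⟨j, hj⟩ := List.getElem?_of_mem hu
  have hjlt : j < ts.length := by
    rw [← h0]
    exact List.getElem?_eq_some_iff.mp hj |>.1
  exact h2 j u hjlt hj

theorem eps_irreducible_app {R : TRS F} {f : F} {us : List (Term F)}
    (h : ∀ u ∈ us, NormalForm R u) : EpsIrreducible R (Term.app f us) := by
  intro p u hs hp
  cases hs with
  | here => exact absurd rfl hp
  | there hget hs' =>
    rename_i u0 _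
    exact (h u0 (List.mem_of_getElem? hget)).subterm hs'

/-- Chasing a term of root `f` to its normal form: either the normal form still has
root `f`, or the last step is a root step with a rule whose lhs has root `f`. -/
theorem chase {R : TRS F} (hC : Confluent R) (hT : Terminating R) (hFC : FCclosed R)
    (hq : QuasiDet (RHSset R)) {N : Term F} {f : F} {ts : List (Term F)}
    (hN : NFof R (Term.app f ts) N) :
    (∃ (l r : Term F) (δ : Nat → Term F), (l, r) ∈ R ∧ l.root = some f ∧ N = r.subst δ) ∨
    N.root = some f := by
  obtain ⟨us, hstar, hnorm⟩ := nf_args hT f ts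
  have hstarN : StarRW R (Term.app f us) N := star_to_nf hC hN hstar
  by_cases hnf : NormalForm R (Term.app f us)
  · right
    rw [normal_star_eq hnf hstarN]
    rfl
  · have hIR : InnermostRedex R (Term.app f us) := ⟨eps_irreducible_app hnorm, hnf⟩
    have hstep : OneStep R (Term.app f us) N := hFC _ hIR N ⟨hstarN, hN.2⟩
    obtain ⟨ρ, hρ, σ, p, hp1, hp2⟩ := hstep
    cases p with
    | nil =>
      left
      refine ⟨ρ.1, ρ.2, σ, hρ, ?_, hp2.nil_eq⟩
      exact Term.not_isVar_of_subst_eq hp1.nil_eq (hq.1 ρ (Or.inl hρ)).1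
    | cons i q =>
      exfalso
      have hsub : ¬ NormalForm R (ρ.1.subst σ) := by
        intro hn
        exact hn _ (rule_root_step (show (ρ.1, ρ.2) ∈ R from hρ) σ)
      exact hsub (hIR.1 _ _ hp1 (by simp))

/-! ### Unification -/

namespace Term

theorem subst_id : ∀ t : Term F, t.subst Term.var = t := by
  intro t
  induction t using my_induction with
  | hv n => simp
  | ha f ts ih =>
    simp only [subst_app, app.injEq, true_and]
    conv_rhs => rw [← List.map_id ts]
    exact List.map_congr_left ih

theorem mem_varsL_subst {σ : Nat → Term F} {n : Nat} :
    ∀ {t : Term F}, n ∈ (t.subst σ).varsL → ∃ m ∈ t.varsL, n ∈ (σ m).varsL := by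
  intro t
  induction t using my_induction with
  | hv k => intro h; exact ⟨k, by simp, by simpa using h⟩
  | ha f ts ih =>
    intro h
    simp only [subst_app, varsL_app, List.mem_flatten, List.mem_map, List.map_map] at h
    obtain ⟨_, ⟨t', ht', rfl⟩, hn⟩ := h
    obtain ⟨m, hm1, hm2⟩ := ih t' ht' hn
    refine ⟨m, ?_, hm2⟩
    simp only [varsL_app, List.mem_flatten, List.mem_map]
    exact ⟨t'.varsL, ⟨t', ht', rfl⟩, hm1⟩

end Term

namespace Unif

abbrev Sys (F : Type) := List (Term F × Term F)

def UnifiesE (θ : Nat → Term F) (E : Sys F) : Prop :=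
  ∀ e ∈ E, (e.1).subst θ = (e.2).subst θ

def varsF (t : Term F) : Finset Nat := t.varsL.toFinset

@[simp] theorem mem_varsF {t : Term F} {n : Nat} : n ∈ varsF t ↔ n ∈ t.varsL := by
  simp [varsF]

def varsS : Sys F → Finset Nat
  | [] => ∅
  | e :: E => varsF e.1 ∪ varsF e.2 ∪ varsS E

theorem mem_varsS {n : Nat} : ∀ {E : Sys F},
    n ∈ varsS E ↔ ∃ e ∈ E, n ∈ varsF e.1 ∨ n ∈ varsF e.2 := by
  intro E
  induction E with
  | nil => simp [varsS]
  | cons e E ih =>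
    simp only [varsS, Finset.mem_union, ih, List.mem_cons]
    constructor
    · rintro ((h | h) | ⟨e', he', h⟩)
      · exact ⟨e, Or.inl rfl, Or.inl h⟩
      · exact ⟨e, Or.inl rfl, Or.inr h⟩
      · exact ⟨e', Or.inr he', h⟩
    · rintro ⟨e', (rfl | he'), h⟩
      · exact Or.inl h
      · exact Or.inr ⟨e', he', h⟩

def sizeS (E : Sys F) : Nat := (E.map (fun e => e.1.size + e.2.size)).sum

@[simp] theorem sizeS_nil : sizeS ([] : Sys F) = 0 := rfl
@[simp] theorem sizeS_cons (e : Term F × Term F) (E : Sys F) :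
    sizeS (e :: E) = e.1.size + e.2.size + sizeS E := by simp [sizeS]

theorem sizeS_append (E E' : Sys F) : sizeS (E ++ E') = sizeS E + sizeS E' := by
  simp [sizeS]

theorem sizeS_zip : ∀ (ts us : List (Term F)), ts.length = us.length →
    sizeS (ts.zip us) = (ts.map Term.size).sum + (us.map Term.size).sum
  | [], [], _ => rfl
  | t :: ts, u :: us, h => by
      simp only [List.zip_cons_cons, sizeS_cons, List.map_cons, List.sum_cons]
      rw [sizeS_zip ts us (by simpa using h)]
      omega
  | [], _ :: _, h => by simp at h
  | _ :: _, [], h => by simp at h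

theorem zip_forall_of_map_eq {g h : Term F → Term F} :
    ∀ {ts us : List (Term F)}, ts.map g = us.map h →
      ∀ p ∈ ts.zip us, g p.1 = h p.2 := by
  intro ts
  induction ts with
  | nil => intro us _ p hp; simp at hp
  | cons t ts ih =>
    intro us hm p hp
    cases us with
    | nil => simp at hp
    | cons u us =>
      simp only [List.map_cons, List.cons.injEq] at hm
      simp only [List.zip_cons_cons, List.mem_cons] at hp
      rcases hp with rfl | hp
      · exact hm.1
      · exact ih hm.2 p hp

theorem map_eq_of_zip_forall {g h : Term F → Term F} :
    ∀ {ts us : List (Term F)}, ts.length = us.length →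
      (∀ p ∈ ts.zip us, g p.1 = h p.2) → ts.map g = us.map h := by
  intro ts
  induction ts with
  | nil => intro us hl _; cases us with
    | nil => rfl
    | cons => simp at hl
  | cons t ts ih =>
    intro us hl hp
    cases us with
    | nil => simp at hl
    | cons u us =>
      simp only [List.map_cons]
      rw [hp (t, u) (by simp), ih (by simpa using hl) (fun p hp' => hp p (by simp [hp']))]

theorem varsS_zip_subset {ts us : List (Term F)} {f g : F} {E : Sys F} :
    varsS (ts.zip us ++ E) ⊆ varsS ((Term.app f ts, Term.app g us) :: E) := by
  intro n hn
  rw [mem_varsS] at hn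
  obtain ⟨e, he, hor⟩ := hn
  rw [List.mem_append] at he
  rcases he with he | he
  · obtain ⟨hts, hus⟩ := List.of_mem_zip he
    rw [mem_varsS]
    refine ⟨_, List.mem_cons_self, ?_⟩
    rcases hor with h | h
    · left
      simp only [mem_varsF, Term.varsL_app, List.mem_flatten, List.mem_map] at h ⊢
      exact ⟨e.1.varsL, ⟨e.1, hts, rfl⟩, by simpa using h⟩
    · right
      simp only [mem_varsF, Term.varsL_app, List.mem_flatten, List.mem_map] at h ⊢
      exact ⟨e.2.varsL, ⟨e.2, hus, rfl⟩, by simpa using h⟩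
  · rw [mem_varsS]
    exact ⟨e, List.mem_cons_of_mem _ he, hor⟩

theorem varsS_tail_subset {e : Term F × Term F} {E : Sys F} :
    varsS E ⊆ varsS (e :: E) := by
  intro n hn
  simp only [varsS, Finset.mem_union]
  exact Or.inr hn

end Unif

namespace Unif

/-- the single-variable binding substitution -/
def bindv (x : Nat) (t : Term F) : Nat → Term F := fun n => if n = x then t else Term.var n

theorem bindv_comp {x : Nat} {t : Term F} {θ : Nat → Term F} (hx : θ x = t.subst θ) (u : Term F) :
    (u.subst (bindv x t)).subst θ = u.subst θ := by
  rw [Term.subst_subst]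
  congr 1
  funext n
  by_cases h : n = x
  · subst h; simp [bindv, hx.symm]
  · simp [bindv, h]

theorem bindv_skip {x : Nat} {t : Term F} (hxt : x ∉ t.varsL) : t.subst (bindv x t) = t := by
  rw [show t.subst (bindv x t) = t.subst Term.var from ?_, Term.subst_id]
  apply Term.subst_ext
  intro n hn
  have : n ≠ x := fun h => hxt (h ▸ hn)
  simp [bindv, this]

theorem mem_vars_bindv {x : Nat} {t : Term F} (hxt : x ∉ t.varsL) {u : Term F} {n : Nat}
    (h : n ∈ (u.subst (bindv x t)).varsL) : (n ∈ u.varsL ∧ n ≠ x) ∨ n ∈ t.varsL := by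
  obtain ⟨m, hm1, hm2⟩ := Term.mem_varsL_subst h
  by_cases hmx : m = x
  · subst hmx; right; simpa [bindv] using hm2
  · left
    simp only [bindv, if_neg hmx, Term.varsL_var, List.mem_singleton] at hm2
    subst hm2
    exact ⟨hm1, hmx⟩

theorem ex_mgu_aux : ∀ (v s : Nat) (E : Sys F), (varsS E).card ≤ v → sizeS E ≤ s →
    (∃ θ, UnifiesE θ E) →
    ∃ ψ, UnifiesE ψ E ∧ ∀ τ, UnifiesE τ E → ∃ δ, ∀ n, τ n = (ψ n).subst δ := by
  intro v
  induction v using Nat.strong_induction_on with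
  | _ v ihv =>
  intro s
  induction s using Nat.strong_induction_on with
  | _ s ihs =>
  intro E hv hs hsolv
  -- the variable-elimination step
  have elim : ∀ (x : Nat) (t : Term F) (E'' : Sys F), x ∉ t.varsL →
      (varsF (Term.var x : Term F) ∪ varsF t ∪ varsS E'' ⊆ varsS E) →
      (∃ θ, θ x = t.subst θ ∧ UnifiesE θ E'') →
      ∃ ψ, ψ x = t.subst ψ ∧ UnifiesE ψ E'' ∧
        ∀ τ, τ x = t.subst τ → UnifiesE τ E'' → ∃ δ, ∀ n, τ n = (ψ n).subst δ := by
    intro x t E'' hxt hsub ⟨θ, hθx, hθE⟩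
    set E2 : Sys F := E''.map (fun e => (e.1.subst (bindv x t), e.2.subst (bindv x t))) with hE2
    have hθE2 : UnifiesE θ E2 := by
      intro e he
      simp only [hE2, List.mem_map] at he
      obtain ⟨e', he', rfl⟩ := he
      simp only [bindv_comp hθx]
      exact hθE e' he'
    have hxE : x ∈ varsS E := hsub (by simp)
    have hsubset : varsS E2 ⊆ (varsS E).erase x := by
      intro n hn
      rw [mem_varsS] at hn
      obtain ⟨e, he, hor⟩ := hn
      simp only [hE2, List.mem_map] at he
      obtain ⟨e', he', rfl⟩ := he
      have hn' : (n ∈ e'.1.varsL ∧ n ≠ x) ∨ n ∈ t.varsL ∨ (n ∈ e'.2.varsL ∧ n ≠ x) := by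
        rcases hor with h | h
        · rcases mem_vars_bindv hxt (by simpa using h) with h' | h'
          · exact Or.inl h'
          · exact Or.inr (Or.inl h')
        · rcases mem_vars_bindv hxt (by simpa using h) with h' | h'
          · exact Or.inr (Or.inr h')
          · exact Or.inr (Or.inl h')
      rw [Finset.mem_erase]
      rcases hn' with ⟨h1, h2⟩ | h1 | ⟨h1, h2⟩
      · refine ⟨h2, hsub ?_⟩
        have : n ∈ varsS E'' := mem_varsS.mpr ⟨e', he', Or.inl (by simpa using h1)⟩
        simp only [Finset.mem_union]; exact Or.inr this
      · refine ⟨fun hnx => hxt (hnx ▸ h1), hsub ?_⟩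
        simp only [Finset.mem_union, mem_varsF]
        exact Or.inl (Or.inr h1)
      · refine ⟨h2, hsub ?_⟩
        have : n ∈ varsS E'' := mem_varsS.mpr ⟨e', he', Or.inr (by simpa using h1)⟩
        simp only [Finset.mem_union]; exact Or.inr this
    have hcard : (varsS E2).card < (varsS E).card := by
      calc (varsS E2).card ≤ ((varsS E).erase x).card := Finset.card_le_card hsubset
        _ < (varsS E).card := by
            rw [Finset.card_erase_of_mem hxE]
            have : 0 < (varsS E).card := Finset.card_pos.mpr ⟨x, hxE⟩
            omega
    have hvpos : 0 < v := lt_of_lt_of_le (Nat.lt_of_le_of_lt (Nat.zero_le _) hcard) hv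
    obtain ⟨ψ2, hψ2, hψ2f⟩ := ihv (v - 1) (by omega) (sizeS E2) E2
      (by omega) le_rfl ⟨θ, hθE2⟩
    refine ⟨fun n => (bindv x t n).subst ψ2, ?_, ?_, ?_⟩
    · show (bindv x t x).subst ψ2 = _
      rw [← Term.subst_subst, bindv_skip hxt]
      simp [bindv]
    · intro e he
      have := hψ2 (e.1.subst (bindv x t), e.2.subst (bindv x t))
        (by simp only [hE2, List.mem_map]; exact ⟨e, he, rfl⟩)
      simpa only [Term.subst_subst] using this
    · intro τ hτx hτE
      have hτE2 : UnifiesE τ E2 := by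
        intro e he
        simp only [hE2, List.mem_map] at he
        obtain ⟨e', he', rfl⟩ := he
        simp only [bindv_comp hτx]
        exact hτE e' he'
      obtain ⟨δ, hδ⟩ := hψ2f τ hτE2
      refine ⟨δ, fun n => ?_⟩
      rw [Term.subst_subst]
      have : (bindv x t n).subst (fun m => (ψ2 m).subst δ) = (bindv x t n).subst τ := by
        apply Term.subst_ext
        intro m _
        exact (hδ m).symm
      rw [this]
      by_cases h : n = x
      · subst h; simp [bindv, hτx.symm]
      · simp [bindv, h]
  cases E with
  | nil =>
    refine ⟨Term.var, by intro e he; simp at he, fun τ _ => ⟨τ, fun n => by simp⟩⟩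
  | cons e E' =>
    obtain ⟨a, b⟩ := e
    obtain ⟨θ, hθ⟩ := hsolv
    have hab : a.subst θ = b.subst θ := hθ (a, b) (List.mem_cons_self)
    have hθE' : UnifiesE θ E' := fun e he => hθ e (List.mem_cons_of_mem _ he)
    have hvE' : (varsS E').card ≤ v :=
      le_trans (Finset.card_le_card varsS_tail_subset) hv
    cases a with
    | var x =>
      by_cases hbx : b = Term.var x
      · -- trivial pair, drop it
        subst hbx
        have hsz : sizeS E' < s := by
          have := hs; simp only [sizeS_cons] at this; simp at this ⊢; omega
        obtain ⟨ψ, hψ, hψf⟩ := ihs (sizeS E') hsz E' hvE' le_rfl ⟨θ, hθE'⟩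
        refine ⟨ψ, ?_, ?_⟩
        · intro e he
          rcases List.mem_cons.mp he with rfl | he'
          · rfl
          · exact hψ e he'
        · intro τ hτ
          exact hψf τ (fun e he => hτ e (List.mem_cons_of_mem _ he))
      · by_cases hxb : x ∈ b.varsL
        · -- occurs check fails: no unifier, contradiction with θ
          exfalso
          cases b with
          | var y =>
            simp only [Term.varsL_var, List.mem_singleton] at hxb
            exact hbx (by rw [hxb])
          | app g us =>
            have h1 : (θ x).size < ((Term.app g us).subst θ).size :=
              Term.size_subst_lt θ hxb
            rw [← hab] at h1
            simp at h1
        · -- eliminate x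
          obtain ⟨ψ, hψ1, hψ2, hψf⟩ := elim x b E' hxb subset_rfl
            ⟨θ, by simpa using hab, hθE'⟩
          refine ⟨ψ, ?_, ?_⟩
          · intro e he
            rcases List.mem_cons.mp he with rfl | he'
            · simpa using hψ1
            · exact hψ2 e he'
          · intro τ hτ
            refine hψf τ ?_ (fun e he => hτ e (List.mem_cons_of_mem _ he))
            simpa using hτ (Term.var x, b) (List.mem_cons_self)
    | app f ts =>
      cases b with
      | var x =>
        by_cases hxb : x ∈ (Term.app f ts).varsL
        · exfalso
          have h1 : (θ x).size < ((Term.app f ts).subst θ).size :=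
            Term.size_subst_lt θ hxb
          rw [hab] at h1
          simp at h1
        · obtain ⟨ψ, hψ1, hψ2, hψf⟩ := elim x (Term.app f ts) E' hxb
            (by intro n hn
                simp only [varsS, Finset.mem_union] at hn ⊢
                tauto)
            ⟨θ, by simpa using hab.symm, hθE'⟩
          refine ⟨ψ, ?_, ?_⟩
          · intro e he
            rcases List.mem_cons.mp he with rfl | he'
            · simpa using hψ1.symm
            · exact hψ2 e he'
          · intro τ hτ
            refine hψf τ ?_ (fun e he => hτ e (List.mem_cons_of_mem _ he))
            have := hτ (Term.app f ts, Term.var x) (List.mem_cons_self)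
            simpa using this.symm
      | app g us =>
        simp only [Term.subst_app, Term.app.injEq] at hab
        obtain ⟨rfl, hmaps⟩ := hab
        have hlen : ts.length = us.length := by
          have := congrArg List.length hmaps
          simpa using this
        set E2 : Sys F := ts.zip us ++ E' with hE2def
        have hθE2 : UnifiesE θ E2 := by
          intro e he
          rcases List.mem_append.mp he with he | he
          · exact zip_forall_of_map_eq hmaps e he
          · exact hθE' e he
        have hszE : sizeS ((Term.app f ts, Term.app f us) :: E')
            = sizeS E2 + 2 := by
          simp only [sizeS_cons, hE2def, sizeS_append, sizeS_zip ts us hlen,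
            Term.size_app]
          omega
        have hsz2 : sizeS E2 < s := by
          have := hs
          rw [hszE] at this
          omega
        have hv2 : (varsS E2).card ≤ v :=
          le_trans (Finset.card_le_card (varsS_zip_subset (f := f) (g := f))) hv
        obtain ⟨ψ, hψ, hψf⟩ := ihs (sizeS E2) hsz2 E2 hv2 le_rfl ⟨θ, hθE2⟩
        refine ⟨ψ, ?_, ?_⟩
        · intro e he
          rcases List.mem_cons.mp he with rfl | he'
          · simp only [Term.subst_app, Term.app.injEq, true_and]
            exact map_eq_of_zip_forall hlen
              (fun p hp => hψ p (List.mem_append_left _ hp))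
          · exact hψ e (List.mem_append_right _ he')
        · intro τ hτ
          have habτ := hτ (Term.app f ts, Term.app f us) (List.mem_cons_self)
          simp only [Term.subst_app, Term.app.injEq, true_and] at habτ
          refine hψf τ ?_
          intro e he
          rcases List.mem_append.mp he with he | he
          · exact zip_forall_of_map_eq habτ e he
          · exact hτ e (List.mem_cons_of_mem _ he)

theorem exists_mgu {s t : Term F} (h : ∃ θ, Unifies θ s t) : ∃ ψ, IsMGU ψ s t := by
  obtain ⟨θ, hθ⟩ := h
  have hsolv : ∃ θ, UnifiesE θ [(s, t)] := ⟨θ, by intro e he; simp at he; rw [he]; exact hθ⟩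
  obtain ⟨ψ, hψ, hψf⟩ := ex_mgu_aux (varsS [(s, t)]).card (sizeS [(s, t)]) [(s, t)]
    le_rfl le_rfl hsolv
  refine ⟨ψ, hψ (s, t) (List.mem_cons_self), ?_⟩
  intro τ hτ
  exact hψf τ (by intro e he; simp at he; rw [he]; exact hτ)

end Unif

/-! ### The key contradiction: two distinct rules whose rhs's share an instance -/

theorem Term.not_isVar_subst {t : Term F} (h : ¬ t.IsVar) (σ : Nat → Term F) :
    ¬ (t.subst σ).IsVar := by
  cases t with
  | var n => exact absurd trivial h
  | app f ts => simp only [Term.subst_app]; exact fun hv => hv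

theorem le_foldr_max : ∀ (l : List Nat), ∀ n ∈ l, n ≤ l.foldr max 0 := by
  intro l
  induction l with
  | nil => simp
  | cons a l ih =>
    intro n hn
    rcases List.mem_cons.mp hn with rfl | hn
    · exact le_max_left _ _
    · exact le_trans (ih n hn) (le_max_right _ _)

theorem ne_of_root_ne {s t : Term F} (h : s.root ≠ t.root) : s ≠ t := by
  intro he; exact h (he ▸ rfl)

/-- Build an element of the rhs-overlap part of `RHSset R` given a common instance of the
rhs's of two rules with lhs's of distinct roots. -/
theorem rhs_overlap_mem {R : TRS F} {lX rX lY rY : Term F}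
    (hX : (lX, rX) ∈ R) (hY : (lY, rY) ∈ R)
    (hnvX : ¬ lX.IsVar) (hnvY : ¬ lY.IsVar)
    (hroots : lX.root ≠ lY.root) {δX δY : Nat → Term F}
    (h : rX.subst δX = rY.subst δY) :
    ∃ e ∈ RHSset R, e.1.root = lX.root ∧ e.2.root = lY.root := by
  set M : Nat := rX.varsL.foldr max 0 + 1 with hM
  set ρ : Nat → Term F := fun n => Term.var (n + M) with hρ
  set θ0 : Nat → Term F := fun n => if n < M then δX n else δY (n - M) with hθ0
  have hu1 : rX.subst θ0 = rX.subst δX := by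
    apply Term.subst_ext
    intro n hn
    have : n < M := by
      have := le_foldr_max rX.varsL n hn
      omega
    simp [hθ0, this]
  have hu2 : (rY.subst ρ).subst θ0 = rY.subst δY := by
    rw [Term.subst_subst]
    apply Term.subst_ext
    intro n _
    have h1 : ¬ (n + M < M) := by omega
    simp only [hρ, Term.subst_var, hθ0, if_neg h1]
    congr 1
    omega
  have hunif : ∃ θ, Unifies θ rX (rY.subst ρ) := ⟨θ0, by rw [Unifies, hu1, hu2, h]⟩
  obtain ⟨ψ, hψ⟩ := Unif.exists_mgu hunif
  refine ⟨(lX.subst ψ, ((lY.subst ρ).subst ψ)), ?_, ?_, ?_⟩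
  · right
    refine ⟨lX, rX, lY, rY, ρ, ψ, hX, hY, ⟨fun n => n + M, ?_, fun n => rfl⟩, hψ, ?_, rfl⟩
    · intro a b hab; simp only at hab; omega
    · apply ne_of_root_ne
      rw [Term.root_subst hnvX, Term.subst_subst]
      have : ¬ lY.IsVar → (lY.subst (fun n => (ρ n).subst ψ)).root = lY.root :=
        fun hv => Term.root_subst hv _
      rw [this hnvY]
      exact hroots
  · exact Term.root_subst hnvX ψ
  · rw [Term.subst_subst]
    exact Term.root_subst hnvY _

theorem rhs_common_instance_false {R : TRS F} (hq : QuasiDet (RHSset R))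
    {lX rX lY rY : Term F} (hX : (lX, rX) ∈ R) (hY : (lY, rY) ∈ R)
    (hne : (lX, rX) ≠ (lY, rY)) {δX δY : Nat → Term F}
    (h : rX.subst δX = rY.subst δY) : False := by
  have hnvX := hq.1 (lX, rX) (Or.inl hX)
  have hnvY := hq.1 (lY, rY) (Or.inl hY)
  have hrr : rX.root = rY.root := by
    rw [← Term.root_subst hnvX.2 δX, ← Term.root_subst hnvY.2 δY, h]
  by_cases hl : lX.root = lY.root
  · exact hq.2.2 (lX, rX) (Or.inl hX) (lY, rY) (Or.inl hY) hne (Or.inl ⟨hl, hrr⟩)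
  · obtain ⟨e, he, he1, he2⟩ := rhs_overlap_mem hX hY hnvX.1 hnvY.1 hl h
    obtain ⟨e', he', he'1, he'2⟩ := rhs_overlap_mem hY hX hnvY.1 hnvX.1 (Ne.symm hl) h.symm
    have hnee : e ≠ e' := by
      intro hee
      apply hl
      rw [← he1, hee]
      exact he'1
    exact hq.2.2 e he e' he' hnee (Or.inr ⟨he1.trans he'2.symm, he2.trans he'1.symm⟩)

theorem Term.exists_app {t : Term F} (h : ¬ t.IsVar) : ∃ f ts, t = Term.app f ts := by
  cases t with
  | var n => exact absurd trivial h
  | app f ts => exact ⟨f, ts, rfl⟩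

/-- for distinct rules of an LM-system (renamed apart), the rhs of the
first is not unifiable with the lhs of the second (common-instance formulation). -/
theorem rhs_lhs_not_unifiable {F : Type} (R : TRS F) (hlm : LMSystem R)
    (e1 e2 : Rule F) (h1 : e1 ∈ R) (h2 : e2 ∈ R) (hne : e1 ≠ e2) :
    ¬ ∃ (σ τ : Nat → Term F), e1.2.subst σ = e2.1.subst τ := by
  rintro ⟨σ, τ, hcommon⟩
  obtain ⟨hC, hT⟩ := hlm.convergent
  have hFC := hlm.forwardClosed
  have hq := hlm.quasiDet
  have nv1 := hq.1 e1 (Or.inl h1)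
  have nv2 := hq.1 e2 (Or.inl h2)
  obtain ⟨α, as, hl1⟩ := Term.exists_app nv1.1
  obtain ⟨φ, rs, hr1⟩ := Term.exists_app nv1.2
  obtain ⟨φ', ls, hl2⟩ := Term.exists_app nv2.1
  obtain ⟨γ, gs, hr2⟩ := Term.exists_app nv2.2
  -- the roots of r1 and l2 agree
  have hroot : φ = φ' := by
    have := congrArg Term.root hcommon
    rw [hr1, hl2] at this
    simp only [Term.subst_app, Term.root] at this
    exact Option.some.inj this
  subst hroot
  -- root distinctions from quasi-determinism
  have h12 : α ≠ φ := by
    have := hq.2.1 e1 (Or.inl h1)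
    rw [hl1, hr1] at this
    simp only [Term.root, ne_eq, Option.some.injEq] at this
    exact this
  have h22 : φ ≠ γ := by
    have := hq.2.1 e2 (Or.inl h2)
    rw [hl2, hr2] at this
    simp only [Term.root, ne_eq, Option.some.injEq] at this
    exact this
  have hsim := hq.2.2 e1 (Or.inl h1) e2 (Or.inl h2) hne
  have h1r2 : α ≠ γ := by
    intro h
    apply hsim
    right
    constructor
    · rw [hl1, hr2, h]; rfl
    · rw [hr1, hl2]; rfl
  -- the normal form of the common instance
  obtain ⟨N, hN⟩ := nf_exists hT (e1.2.subst σ)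
  -- (A) chase from l1·σ
  have hstepA : OneStep R (e1.1.subst σ) (e1.2.subst σ) := by
    have : (e1.1, e1.2) ∈ R := h1
    exact rule_root_step this σ
  have hNA : NFof R (e1.1.subst σ) N :=
    ⟨Relation.ReflTransGen.head hstepA hN.1, hN.2⟩
  rw [hl1, Term.subst_app] at hNA
  have resA := chase hC hT hFC hq hNA
  -- (B) chase from the common instance itself
  have hNB := hN
  rw [hr1, Term.subst_app] at hNB
  have resB := chase hC hT hFC hq hNB
  -- (C) chase from r2·τ
  have hstepC : OneStep R (e2.1.subst τ) (e2.2.subst τ) := by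
    have : (e2.1, e2.2) ∈ R := h2
    exact rule_root_step this τ
  rw [← hcommon] at hstepC
  have hNC : NFof R (e2.2.subst τ) N :=
    ⟨star_to_nf hC hN (Relation.ReflTransGen.single hstepC), hN.2⟩
  rw [hr2, Term.subst_app] at hNC
  have resC := chase hC hT hFC hq hNC
  -- case analysis
  rcases resA with ⟨lA, rA, δA, hmemA, hrootA, hNA'⟩ | hNrootA
  · rcases resB with ⟨lB, rB, δB, hmemB, hrootB, hNB'⟩ | hNrootB
    · -- two rules with lhs roots α ≠ φ
      refine rhs_common_instance_false hq hmemA hmemB ?_ (hNA'.symm.trans hNB')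
      intro he
      have hfst : lA = lB := congrArg Prod.fst he
      rw [hfst, hrootB] at hrootA
      exact h12 (Option.some.inj hrootA).symm
    · rcases resC with ⟨lC, rC, δC, hmemC, hrootC, hNC'⟩ | hNrootC
      · refine rhs_common_instance_false hq hmemA hmemC ?_ (hNA'.symm.trans hNC')
        intro he
        have hfst : lA = lC := congrArg Prod.fst he
        rw [hfst, hrootC] at hrootA
        exact h1r2 (Option.some.inj hrootA).symm
      · rw [hNrootB] at hNrootC
        exact h22 (Option.some.inj hNrootC)
  · rcases resB with ⟨lB, rB, δB, hmemB, hrootB, hNB'⟩ | hNrootB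
    · rcases resC with ⟨lC, rC, δC, hmemC, hrootC, hNC'⟩ | hNrootC
      · refine rhs_common_instance_false hq hmemB hmemC ?_ (hNB'.symm.trans hNC')
        intro he
        have hfst : lB = lC := congrArg Prod.fst he
        rw [hfst, hrootC] at hrootB
        exact h22 (Option.some.inj hrootB).symm
      · rw [hNrootA] at hNrootC
        exact h1r2 (Option.some.inj hNrootC)
    · rw [hNrootA] at hNrootB
      exact h12 (Option.some.inj hNrootB)
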